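/- If there is no surjection from a type C onto a type C', then the ordinal coded by the canonical tree on any well-ordering of C' is not equal (as a set) to the set coded by any tree of finite sequences over C. Contrapositive form used in the paper: if an ordinal α is coded by some suitable C-tree, then there is a surjection from C onto α (for infinite C). -/

import Mathlib

universe u

open Cardinal

/-- `τ` is a daughter of `σ` in the tree `T`: it extends `σ` by one entry. -/
def Daughter {C : Type u} (T : Set (List C)) (τ σ : List C) : Prop :=
  τ ∈ T ∧ ∃ c : C, τ = σ ++ [c]

/-- `T` is closed under initial segments. -/
def IsTree {C : Type u} (T : Set (List C)) : Prop :=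
  ∀ σ ∈ T, ∀ τ : List C, τ <+: σ → τ ∈ T

/-- Decoding of the nodes of a well-founded tree: a node decodes to the set of
decodings of its daughters. -/
noncomputable def decode {C : Type u} (T : Set (List C))
    (hwf : WellFounded (Daughter T)) : List C → PSet.{u} :=
  hwf.fix fun σ ih =>
    PSet.mk {c : C // σ ++ [c] ∈ T} fun c => ih (σ ++ [c.1]) ⟨c.2, c.1, rfl⟩

/-- The von Neumann set (as a pre-set) corresponding to an ordinal. -/
noncomputable def vNp : Ordinal.{u} → PSet.{u} :=
  Ordinal.lt_wf.fix (C := fun _ => PSet.{u}) fun o ih =>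
    PSet.mk o.ToType fun i =>
      ih (@Ordinal.typein o.ToType (· < ·) isWellOrder_lt i) (Ordinal.typein_lt_self i)

/-- The von Neumann ZF-set corresponding to an ordinal. -/
noncomputable def vN (o : Ordinal.{u}) : ZFSet.{u} := ZFSet.mk (vNp o)

theorem vNp_eq (o : Ordinal.{u}) :
    vNp o = PSet.mk o.ToType fun i =>
      vNp (@Ordinal.typein o.ToType (· < ·) isWellOrder_lt i) := by
  exact Ordinal.lt_wf.fix_eq _ o

theorem mem_vN {x : ZFSet.{u}} {o : Ordinal.{u}} : x ∈ vN o ↔ ∃ β < o, x = vN β := by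
  constructor
  · intro h
    rw [vN, vNp_eq, ← ZFSet.mk_out x, ZFSet.mk_mem_iff] at h
    obtain ⟨i, hi⟩ := h
    exact ⟨_, Ordinal.typein_lt_self i,
      by rw [← ZFSet.mk_out x]; exact Quotient.sound hi⟩
  · rintro ⟨β, hβ, rfl⟩
    have hβ' : β < @Ordinal.type o.ToType (· < ·) isWellOrder_lt := by
      rwa [Ordinal.type_toType]
    obtain ⟨i, hi⟩ := @Ordinal.typein_surj o.ToType (· < ·) isWellOrder_lt β hβ'
    rw [vN, vNp_eq (o := o)]
    subst hi
    exact ZFSet.mk_mem_iff.mpr (PSet.Mem.mk _ i)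

theorem vN_mem_vN {o o' : Ordinal.{u}} (h : o < o') : vN o ∈ vN o' :=
  mem_vN.mpr ⟨o, h, rfl⟩

theorem vN_injective : Function.Injective vN := by
  intro o o' h
  rcases lt_trichotomy o o' with hlt | he | hlt
  · exact absurd (h ▸ vN_mem_vN hlt) (ZFSet.mem_irrefl _)
  · exact he
  · exact absurd (h ▸ vN_mem_vN hlt) (ZFSet.mem_irrefl _)

theorem decode_eq {C : Type u} (T : Set (List C)) (hwf : WellFounded (Daughter T))
    (σ : List C) :
    decode T hwf σ = PSet.mk {c : C // σ ++ [c] ∈ T}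
      fun c => decode T hwf (σ ++ [c.1]) := by
  exact hwf.fix_eq _ σ

/-- If an ordinal `α` (as a von Neumann set) is coded by a suitable `C`-tree with `C`
infinite, then `#α ≤ #C`: hence no suitable `C`-tree codes an ordinal of cardinality
greater than `#C`. -/
theorem card_le_of_coded_by_tree {C : Type u} [Infinite C]
    (T : Set (List C)) (hT : IsTree T) (hne : [] ∈ T)
    (hwf : WellFounded (Daughter T)) (α : Ordinal.{u})
    (hcode : ZFSet.mk (decode T hwf []) = vN α) :
    α.card ≤ #C := by
  have key : ∀ i : α.ToType, ∃ c : C, [] ++ [c] ∈ T ∧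
      vN (@Ordinal.typein α.ToType (· < ·) isWellOrder_lt i)
        = ZFSet.mk (decode T hwf ([] ++ [c])) := by
    intro i
    have hmem : vN (@Ordinal.typein α.ToType (· < ·) isWellOrder_lt i) ∈
        ZFSet.mk (decode T hwf []) := by
      rw [hcode]
      exact vN_mem_vN (Ordinal.typein_lt_self i)
    rw [decode_eq, vN, ZFSet.mk_mem_iff] at hmem
    obtain ⟨c, hc⟩ := hmem
    exact ⟨c.1, c.2, Quotient.sound hc⟩
  choose f hfT hf using key
  have hinj : Function.Injective f := by
    intro i j hij
    have : vN (@Ordinal.typein α.ToType (· < ·) isWellOrder_lt i)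
        = vN (@Ordinal.typein α.ToType (· < ·) isWellOrder_lt j) := by
      rw [hf i, hf j, hij]
    exact @Ordinal.typein_injective α.ToType (· < ·) isWellOrder_lt i j (vN_injective this)
  calc α.card = #α.ToType := (Cardinal.mk_toType α).symm
    _ ≤ #C := Cardinal.mk_le_of_injective hinj
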